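/- When Algorithm nonlin-cut returns with accuracy parameter ρ and loss ℓ satisfying condition 3(a) with constants c, k, the complementary slackness defect satisfies kᵀx ≤ κ·k·ℓ'(1)·(1−ρ)·vol(S) / c, where k = [0, κd − g, 0]ᵀ is the vector of KKT multipliers. -/

import Mathlib

/-- When nonlin-cut returns with accuracy parameter `ρ` and loss satisfying
condition 3(a) with constants `c, k`, the complementary slackness defect
satisfies `kᵀx = ∑_i (κ d_i − g_i) x_i ≤ κ k ℓ'(1)(1−ρ) vol(S)/c`. -/
theorem stmt_15 {V : Type*} [Fintype V] [DecidableEq V]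
    (w : V → V → ℝ) (hsym : ∀ i j, w i j = w j i) (hw : ∀ i j, 0 ≤ w i j)
    (d : V → ℝ) (hd : ∀ i, d i = ∑ j, w i j)
    (S : Finset V) (γ κ ρ c k : ℝ) (hγ : 0 < γ) (hκ : 0 < κ)
    (hρ0 : 0 < ρ) (hρ1 : ρ < 1) (hc : 0 < c) (hk : 0 < k)
    (ℓd : ℝ → ℝ) (hmono : StrictMono ℓd)
    (hanti : ∀ t, ℓd (-t) = - ℓd t)
    (hsecond : ∀ t ∈ Set.Ioo (-1 : ℝ) 1, c < deriv ℓd t)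
    (h3a : ∀ t Δ : ℝ, 0 < Δ → ℓd (t + Δ) ≤ ℓd t + k * ℓd Δ)
    (x : V → ℝ) (g : V → ℝ)
    (hg : ∀ i, g i =
      -(1/γ) * ∑ j, w i j * ℓd (x i - x j)
      - d i * ℓd (x i - (if i ∈ S then (1:ℝ) else 0)))
    (hx01 : ∀ i, 0 ≤ x i ∧ x i ≤ 1)
    (hgnn : ∀ i, 0 ≤ g i)
    (hterm : ∀ i, g i ≤ κ * d i)
    (hslack : ∀ i, κ * d i - g i ≤ (1 - ρ) * κ * d i) :
    ∑ i, (κ * d i - g i) * x i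
      ≤ κ * k * ℓd 1 * (1 - ρ) * (∑ i ∈ S, d i) / c := by
  -- basic facts
  have hℓ0 : ℓd 0 = 0 := by have := hanti 0; simp at this; linarith
  have hdiff : ∀ t ∈ Set.Ioo (-1 : ℝ) 1, DifferentiableAt ℝ ℓd t := by
    intro t ht
    by_contra h
    have := hsecond t ht
    rw [deriv_zero_of_not_differentiableAt h] at this
    linarith
  -- key lemma on [0,1)
  have key' : ∀ y : ℝ, 0 ≤ y → y < 1 → c * y ≤ ℓd y := by
    intro y hy0 hy1
    rcases eq_or_lt_of_le hy0 with h | h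
    · simp [← h, hℓ0]
    · have hsm : StrictMonoOn (fun t => ℓd t - c * t) (Set.Ioo (-1 : ℝ) 1) := by
        apply StrictMonoOn.mono (s := Set.Ioo (-1 : ℝ) 1)
          (strictMonoOn_of_deriv_pos (convex_Ioo _ _) ?_ ?_) le_rfl
        · intro t ht
          exact ((hdiff t ht).sub ((differentiableAt_id.const_mul c))).continuousAt.continuousWithinAt
        · intro t ht
          rw [interior_Ioo] at ht
          have h1 : deriv (fun t => ℓd t - c * t) t = deriv ℓd t - c := by
            have hc' : HasDerivAt (fun s : ℝ => c * s) c t := by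
              simpa using (hasDerivAt_id t).const_mul c
            rw [deriv_fun_sub (hdiff t ht) hc'.differentiableAt, hc'.deriv]
          rw [h1]
          have := hsecond t ht
          linarith
      have h0mem : (0 : ℝ) ∈ Set.Ioo (-1 : ℝ) 1 := by constructor <;> norm_num
      have hymem : y ∈ Set.Ioo (-1 : ℝ) 1 := ⟨by linarith, hy1⟩
      have := hsm h0mem hymem h
      simp only [hℓ0] at this
      linarith
  have key : ∀ y : ℝ, 0 ≤ y → y ≤ 1 → c * y ≤ ℓd y := by
    intro y hy0 hy1
    rcases lt_or_eq_of_le hy1 with h | h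
    · exact key' y hy0 h
    · subst h
      by_contra hcon
      push_neg at hcon
      have hm1 : max (ℓd 1 / c) 0 < 1 := by
        apply max_lt _ one_pos
        rw [div_lt_one hc]; linarith
      obtain ⟨t, ht1, ht2⟩ := exists_between hm1
      have ht0 : 0 ≤ t := le_of_lt (lt_of_le_of_lt (le_max_right _ _) ht1)
      have hct : c * t ≤ ℓd t := key' t ht0 ht2
      have : ℓd 1 / c < t := lt_of_le_of_lt (le_max_left _ _) ht1
      have hct2 : ℓd 1 < c * t := by
        rw [div_lt_iff₀ hc] at this; linarith
      have := hmono ht2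
      linarith
  have hℓ1 : 0 < ℓd 1 := lt_of_lt_of_le (by linarith) (key 1 zero_le_one le_rfl)
  have hdnn : ∀ i, 0 ≤ d i := fun i => (hd i) ▸ Finset.sum_nonneg fun j _ => hw i j
  -- double sum vanishes
  set T := ∑ i, ∑ j, w i j * ℓd (x i - x j) with hT
  have hTzero : T = 0 := by
    have h1 : T = -T := by
      nth_rewrite 1 [hT, Finset.sum_comm]
      rw [← Finset.sum_neg_distrib]
      apply Finset.sum_congr rfl
      intro j _
      rw [← Finset.sum_neg_distrib]
      apply Finset.sum_congr rfl
      intro i _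
      have : ℓd (x i - x j) = - ℓd (x j - x i) := by
        rw [← hanti]; ring_nf
      rw [this, hsym i j]; ring
    linarith
  -- sum of residual identity
  have hsum : ∑ i, d i * ℓd (x i - (if i ∈ S then (1:ℝ) else 0)) ≤ 0 := by
    have h0 : 0 ≤ ∑ i, g i := Finset.sum_nonneg fun i _ => hgnn i
    have h1 : ∑ i, g i =
        -(1/γ) * T - ∑ i, d i * ℓd (x i - (if i ∈ S then (1:ℝ) else 0)) := by
      rw [hT, Finset.mul_sum, ← Finset.sum_sub_distrib]
      exact Finset.sum_congr rfl fun i _ => hg i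
    rw [h1, hTzero] at h0
    linarith
  -- bound ∑ d x
  have hdx : c * ∑ i, d i * x i ≤ k * ℓd 1 * ∑ i ∈ S, d i := by
    have step1 : c * ∑ i, d i * x i ≤ ∑ i, d i * ℓd (x i) := by
      rw [Finset.mul_sum]
      apply Finset.sum_le_sum
      intro i _
      have := key (x i) (hx01 i).1 (hx01 i).2
      calc c * (d i * x i) = d i * (c * x i) := by ring
        _ ≤ d i * ℓd (x i) := by
            exact mul_le_mul_of_nonneg_left this (hdnn i)
    have step2 : ∑ i, d i * ℓd (x i) ≤
        ∑ i, (d i * ℓd (x i - (if i ∈ S then (1:ℝ) else 0))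
          + (if i ∈ S then (1:ℝ) else 0) * (d i * (k * ℓd 1))) := by
      apply Finset.sum_le_sum
      intro i _
      by_cases hi : i ∈ S
      · simp only [hi, if_pos]
        have := h3a (x i - 1) 1 one_pos
        simp only [sub_add_cancel] at this
        nlinarith [hdnn i]
      · simp [hi]
    have step3 : ∑ i, (d i * ℓd (x i - (if i ∈ S then (1:ℝ) else 0))
          + (if i ∈ S then (1:ℝ) else 0) * (d i * (k * ℓd 1)))
        = (∑ i, d i * ℓd (x i - (if i ∈ S then (1:ℝ) else 0)))
          + k * ℓd 1 * ∑ i ∈ S, d i := by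
      rw [Finset.sum_add_distrib]
      congr 1
      rw [Finset.mul_sum]
      simp only [ite_mul, one_mul, zero_mul]
      rw [Finset.sum_ite_mem, Finset.univ_inter]
      exact Finset.sum_congr rfl fun i _ => by ring
    have := step3 ▸ step2
    linarith
  -- final chain
  have hA : ∑ i, (κ * d i - g i) * x i ≤ (1 - ρ) * κ * ∑ i, d i * x i := by
    rw [Finset.mul_sum]
    apply Finset.sum_le_sum
    intro i _
    have h1 := hslack i
    have h2 := (hx01 i).1
    nlinarith
  have hB : ∑ i, d i * x i ≤ k * ℓd 1 * (∑ i ∈ S, d i) / c := by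
    rw [le_div_iff₀ hc]
    linarith
  have hρκ : 0 ≤ (1 - ρ) * κ := by nlinarith
  calc ∑ i, (κ * d i - g i) * x i
      ≤ (1 - ρ) * κ * ∑ i, d i * x i := hA
    _ ≤ (1 - ρ) * κ * (k * ℓd 1 * (∑ i ∈ S, d i) / c) :=
        mul_le_mul_of_nonneg_left hB hρκ
    _ = κ * k * ℓd 1 * (1 - ρ) * (∑ i ∈ S, d i) / c := by ring
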